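/- Let d be a positive integer, G a finite group, and F a topologically transitive GCA on G^{Z^d}. Then F is topologically mixing: for every pair of nonempty open sets U, V ⊆ G^{Z^d} there exists n₀ ≥ 1 such that F^n(U) ∩ V ≠ ∅ for all n ≥ n₀. -/

import Mathlib

/-- A self-map `T` of a topological space `X` is topologically transitive if for all
nonempty open sets `U, V ⊆ X` there exists `n ≥ 0` with `T^n(U) ∩ V ≠ ∅`. -/
def TopologicallyTransitive {X : Type*} [TopologicalSpace X] (T : X → X) : Prop :=
  ∀ U V : Set X, IsOpen U → IsOpen V → U.Nonempty → V.Nonempty →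
    ∃ n : ℕ, (T^[n] '' U ∩ V).Nonempty

/-- Every open set in a product of discrete spaces contains a cylinder around each of
its points. -/
private lemma mem_open_cyl {ι G : Type*} [TopologicalSpace G]
    {S : Set (ι → G)} (hS : IsOpen S) {x : ι → G} (hx : x ∈ S) :
    ∃ W : Finset ι, {y : ι → G | ∀ i ∈ W, y i = x i} ⊆ S := by
  have h : S ∈ nhds x := hS.mem_nhds hx
  rw [nhds_pi] at h
  rcases Filter.mem_pi.1 h with ⟨I, hIfin, t, ht, hsub⟩
  refine ⟨hIfin.toFinset, fun y hy => hsub fun i hi => ?_⟩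
  have hyi : y i = x i := hy i (hIfin.mem_toFinset.2 hi)
  rw [hyi]; exact mem_of_mem_nhds (ht i)

open Pointwise

theorem stmt8 (d : ℕ) (hd : 0 < d) (G : Type*) [Group G] [Finite G]
    [TopologicalSpace G] [DiscreteTopology G]
    (F : ((Fin d → ℤ) → G) → ((Fin d → ℤ) → G))
    (hFcont : Continuous F)
    (hFhom : ∀ a b : (Fin d → ℤ) → G, F (a * b) = F a * F b)
    (hFshift : ∀ (u : Fin d → ℤ) (c : (Fin d → ℤ) → G),
      F (fun v => c (v + u)) = fun v => F c (v + u))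
    (hFtrans : TopologicallyTransitive F) :
    ∀ U V : Set ((Fin d → ℤ) → G), IsOpen U → IsOpen V → U.Nonempty → V.Nonempty →
      ∃ n₀ : ℕ, 1 ≤ n₀ ∧ ∀ n ≥ n₀, (F^[n] '' U ∩ V).Nonempty := by
  classical
  -- `F` preserves the identity
  have hFone : F 1 = 1 := by
    have h := hFhom 1 1
    rw [one_mul] at h
    exact (left_eq_mul.1 h)
  have hiter_one : ∀ n : ℕ, F^[n] (1 : (Fin d → ℤ) → G) = 1 :=
    fun n => Function.iterate_fixed hFone n
  have hiter_mul : ∀ (n : ℕ) (a b : (Fin d → ℤ) → G),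
      F^[n] (a * b) = F^[n] a * F^[n] b := by
    intro n
    induction n with
    | zero => intro a b; rfl
    | succ k ih =>
        intro a b
        rw [Function.iterate_succ_apply', Function.iterate_succ_apply',
            Function.iterate_succ_apply', ih, hFhom]
  -- the iterates of `F` as monoid homomorphisms
  let Fn : ℕ → (((Fin d → ℤ) → G) →* ((Fin d → ℤ) → G)) := fun n =>
    { toFun := F^[n], map_one' := hiter_one n, map_mul' := hiter_mul n }
  have hFnapp : ∀ (n : ℕ) (x : (Fin d → ℤ) → G), Fn n x = F^[n] x := fun _ _ => rfl
  -- `F` is surjective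
  have hFsurj : Function.Surjective F := by
    by_contra hns
    rw [Function.Surjective] at hns; push_neg at hns
    obtain ⟨z, hz⟩ := hns
    have hcl : IsClosed (Set.range F) := (isCompact_range hFcont).isClosed
    have hzc : z ∈ (Set.range F)ᶜ := by
      intro hmem
      obtain ⟨x, hx⟩ := hmem
      exact hz x hx
    obtain ⟨W₀, hW₀⟩ := mem_open_cyl hcl.isOpen_compl hzc
    set V' : Set ((Fin d → ℤ) → G) := {y | ∀ i ∈ W₀, y i = z i} with hV'
    have hV'eq : V' = (fun (x : (Fin d → ℤ) → G) (w : W₀) => x w.1) ⁻¹'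
        {fun w : W₀ => z w.1} := by
      ext y
      constructor
      · intro hy
        show (fun w : W₀ => y w.1) ∈ ({fun w : W₀ => z w.1} : Set ((w : W₀) → G))
        rw [Set.mem_singleton_iff]
        funext w
        exact hy w.1 w.2
      · intro hy i hi
        exact congrFun hy ⟨i, hi⟩
    have hcont' : Continuous (fun (x : (Fin d → ℤ) → G) (w : W₀) => x w.1) :=
      continuous_pi fun w => continuous_apply w.1
    have hV'open : IsOpen V' := by
      rw [hV'eq]; exact (isOpen_discrete _).preimage hcont'
    have hV'closed : IsClosed V' := by
      rw [hV'eq]; exact (isClosed_discrete _).preimage hcont'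
    have hFz : F z ∈ V'ᶜ := fun h => hW₀ h ⟨z, rfl⟩
    obtain ⟨n, y, ⟨x, hxU, hxy⟩, hyV⟩ :=
      hFtrans V'ᶜ V' hV'closed.isOpen_compl hV'open ⟨F z, hFz⟩ ⟨z, fun i _ => rfl⟩
    cases n with
    | zero => exact hxU (by simpa [← hxy] using hyV)
    | succ k =>
        refine hW₀ hyV ⟨F^[k] x, ?_⟩
        rw [← hxy, Function.iterate_succ_apply']
  have hsurjn : ∀ n : ℕ, Function.Surjective (Fn n) := fun n => hFsurj.iterate n
  -- now the main argument
  intro U V hU hV hUne hVne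
  obtain ⟨u₀, hu₀⟩ := hUne
  obtain ⟨v₀, hv₀⟩ := hVne
  obtain ⟨WU, hWU⟩ := mem_open_cyl hU hu₀
  obtain ⟨WV, hWV⟩ := mem_open_cyl hV hv₀
  set Wc : Finset (Fin d → ℤ) := WU ∪ WV with hWc
  -- projection onto the window `Wc`
  let π : ((Fin d → ℤ) → G) →* ((w : Wc) → G) :=
    { toFun := fun x w => x w.1, map_one' := rfl, map_mul' := fun _ _ => rfl }
  set N : Subgroup ((Fin d → ℤ) → G) := π.ker with hN
  set Y : ℕ → Subgroup ((Fin d → ℤ) → G) := fun n => N ⊔ N.map (Fn n) with hY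
  have hNleY : ∀ n, N ≤ Y n := fun n => le_sup_left
  have hNleYhat : ∀ n, N ≤ (Y n).comap (Fn n) := by
    intro n x hx
    have h1 : (Fn n) x ∈ N.map (Fn n) := ⟨x, hx, rfl⟩
    exact Subgroup.mem_comap.2 ((le_sup_right : N.map (Fn n) ≤ Y n) h1)
  -- recovering subgroups containing `N` from their image in the finite window group
  have hrec : ∀ K K' : Subgroup ((Fin d → ℤ) → G), N ≤ K → N ≤ K' →
      K.map π = K'.map π → K = K' := by
    intro K K' hK hK' h
    have h2 := congrArg (Subgroup.comap π) h
    rwa [Subgroup.comap_map_eq, Subgroup.comap_map_eq, ← hN,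
      sup_eq_left.2 hK, sup_eq_left.2 hK'] at h2
  -- continuity of the projection
  have hπcont : Continuous (π : ((Fin d → ℤ) → G) →* ((w : Wc) → G)) :=
    continuous_pi fun w => continuous_apply w.1
  -- Main claim: `Y n = ⊤` for all but finitely many `n`
  have hbadfin : {n : ℕ | Y n ≠ ⊤}.Finite := by
    by_contra hinf
    have hinf' : {n : ℕ | Y n ≠ ⊤}.Infinite := hinf
    set f : ℕ → Subgroup ((w : Wc) → G) × Subgroup ((w : Wc) → G) := fun n =>
      ((Y n).map π, ((Y n).comap (Fn n)).map π) with hf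
    obtain ⟨n₁, hn₁, n₂, hn₂, hne, hfeq⟩ :=
      hinf'.exists_ne_map_eq_of_mapsTo (Set.mapsTo_univ f _) Set.finite_univ
    have main : ∀ a b : ℕ, Y a ≠ ⊤ → a < b → f a = f b → False := by
      intro a b hYa hab hfe
      have h1 : (Y a).map π = (Y b).map π := congrArg Prod.fst hfe
      have h2 : ((Y a).comap (Fn a)).map π = ((Y b).comap (Fn b)).map π :=
        congrArg Prod.snd hfe
      have hYeq : Y a = Y b := hrec _ _ (hNleY a) (hNleY b) h1
      have hYhat : (Y a).comap (Fn a) = (Y b).comap (Fn b) :=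
        hrec _ _ (hNleYhat a) (hNleYhat b) h2
      set m := b - a with hm
      have hm1 : 0 < m := by omega
      have hcomp : Fn b = (Fn m).comp (Fn a) := by
        refine MonoidHom.ext fun x => ?_
        show F^[b] x = F^[m] (F^[a] x)
        rw [← Function.iterate_add_apply]
        congr 1
        omega
      have hkey : (Y b).comap (Fn m) = Y a := by
        have h3 : ((Y b).comap (Fn m)).comap (Fn a) = (Y a).comap (Fn a) := by
          rw [Subgroup.comap_comap, ← hcomp, ← hYhat]
        have h4 := congrArg (Subgroup.map (Fn a)) h3
        rwa [Subgroup.map_comap_eq_self_of_surjective (hsurjn a),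
             Subgroup.map_comap_eq_self_of_surjective (hsurjn a)] at h4
      obtain ⟨x₀, hx₀⟩ : ∃ x, x ∉ Y a := by
        by_contra hno
        push_neg at hno
        exact hYa ((Subgroup.eq_top_iff' _).2 hno)
      set Yset : Set ((Fin d → ℤ) → G) := (Y a : Set ((Fin d → ℤ) → G)) with hYset
      -- `Yset` is saturated for the window projection, hence clopen
      have hsat : Yset = ⇑π ⁻¹' (⇑π '' Yset) := by
        apply Set.Subset.antisymm (Set.subset_preimage_image _ _)
        rintro x ⟨y, hyY, hpi⟩
        have hmem : y⁻¹ * x ∈ N := by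
          show π (y⁻¹ * x) = 1
          rw [map_mul, map_inv, hpi, inv_mul_cancel]
        have hxe : x = y * (y⁻¹ * x) := by group
        rw [hYset]
        rw [hxe]
        exact Subgroup.mul_mem _ hyY (hNleY a hmem)
      have hYopen : IsOpen Yset := by
        rw [hsat]; exact (isOpen_discrete _).preimage hπcont
      have hYclosed : IsClosed Yset := by
        rw [hsat]; exact (isClosed_discrete _).preimage hπcont
      set Z : Set ((Fin d → ℤ) → G) := ⋂ j : Fin m, F^[(j : ℕ)] ⁻¹' Yset with hZ
      have hZopen : IsOpen Z :=
        isOpen_iInter_of_finite fun j => hYopen.preimage (hFcont.iterate _)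
      have hZclosed : IsClosed Z :=
        isClosed_iInter fun j => hYclosed.preimage (hFcont.iterate _)
      have hZsub : Z ⊆ Yset := by
        intro x hx
        have h5 := Set.mem_iInter.1 hx ⟨0, hm1⟩
        simpa using h5
      have hstep : ∀ x ∈ Z, F x ∈ Z := by
        intro x hx
        refine Set.mem_iInter.2 fun j => ?_
        show F^[(j : ℕ)] (F x) ∈ Yset
        rw [← Function.iterate_succ_apply]
        rcases lt_or_ge ((j : ℕ) + 1) m with hlt | hge
        · exact Set.mem_iInter.1 hx ⟨(j : ℕ) + 1, hlt⟩
        · have hjm : (j : ℕ) + 1 = m := by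
            have := j.2
            omega
          rw [Nat.succ_eq_add_one, hjm]
          have hxY : x ∈ Y a := hZsub hx
          have hxc : x ∈ (Y b).comap (Fn m) := by rw [hkey]; exact hxY
          have h6 : F^[m] x ∈ Y b := Subgroup.mem_comap.1 hxc
          rw [← hYeq] at h6
          exact h6
      have hiterZ : ∀ k : ℕ, ∀ x ∈ Z, F^[k] x ∈ Z := by
        intro k
        induction k with
        | zero => intro x hx; simpa using hx
        | succ t ih =>
            intro x hx
            rw [Function.iterate_succ_apply']
            exact hstep _ (ih x hx)
      have h1Z : (1 : (Fin d → ℤ) → G) ∈ Z :=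
        Set.mem_iInter.2 fun j => by
          show F^[(j : ℕ)] 1 ∈ Yset
          rw [hiter_one]
          exact Subgroup.one_mem _
      have hx₀c : x₀ ∈ Zᶜ := fun h => hx₀ (hZsub h)
      obtain ⟨n, y, ⟨x, hxZ, hxy⟩, hyc⟩ :=
        hFtrans Z Zᶜ hZopen hZclosed.isOpen_compl ⟨1, h1Z⟩ ⟨x₀, hx₀c⟩
      exact hyc (hxy ▸ hiterZ n x hxZ)
    rcases hne.lt_or_gt with hlt | hlt
    · exact main n₁ n₂ hn₁ hlt hfeq
    · exact main n₂ n₁ hn₂ hlt hfeq.symm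
  -- conclude: beyond the bad set, every time works
  obtain ⟨bnd, hbnd⟩ := hbadfin.bddAbove
  refine ⟨bnd + 1, Nat.le_add_left 1 bnd, fun n hn => ?_⟩
  have hYtop : Y n = ⊤ := by
    by_contra hne
    have h5 := hbnd (show n ∈ {k : ℕ | Y k ≠ ⊤} from hne)
    omega
  -- extract a witness
  have hg : ((F^[n] u₀)⁻¹ * v₀) ∈
      (↑(N.map (Fn n)) : Set ((Fin d → ℤ) → G)) * (↑N : Set ((Fin d → ℤ) → G)) := by
    rw [← Subgroup.mul_normal]
    have htop : N.map (Fn n) ⊔ N = ⊤ := by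
      rw [sup_comm]
      exact hYtop
    rw [htop]
    trivial
  obtain ⟨h, hh, yy, hyy, hhy⟩ := Set.mem_mul.1 hg
  obtain ⟨z, hz, hzeq⟩ := hh
  refine ⟨F^[n] (u₀ * z), ⟨u₀ * z, ?_, rfl⟩, ?_⟩
  · apply hWU
    intro i hi
    have hiW : i ∈ Wc := Finset.mem_union_left _ hi
    have hz1 : z i = 1 := by
      have hzk : π z = 1 := hz
      exact congrFun hzk ⟨i, hiW⟩
    simp [Pi.mul_apply, hz1]
  · have hcalc : F^[n] (u₀ * z) = v₀ * yy⁻¹ := by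
      rw [hiter_mul]
      have hzz : F^[n] z = (F^[n] u₀)⁻¹ * v₀ * yy⁻¹ := by
        have hzh : F^[n] z = h := hzeq
        rw [hzh]
        exact eq_mul_inv_of_mul_eq hhy
      rw [hzz]
      group
    rw [hcalc]
    apply hWV
    intro i hi
    have hiW : i ∈ Wc := Finset.mem_union_right _ hi
    have hy1 : yy i = 1 := by
      have hyk : π yy = 1 := hyy
      exact congrFun hyk ⟨i, hiW⟩
    simp [Pi.mul_apply, Pi.inv_apply, hy1]
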